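/- For every positive integer l, there exists a finite connected simple graph of order 2l and size (l+2)(l+1)/2 − 2 that admits a regular distance l-labeling of degree 2. -/

import Mathlib

open Finset

def myG (l : ℕ) : SimpleGraph (Fin (2 * l)) where
  Adj u v := u.val ≠ v.val ∧ ((u.val ≤ l ∧ v.val ≤ l) ∨ u.val + 1 = v.val ∨ v.val + 1 = u.val)
  symm := ⟨by intro u v ⟨h1, h2⟩; exact ⟨h1.symm, by tauto⟩⟩
  loopless := ⟨by intro v ⟨h, _⟩; exact h rfl⟩

instance (l : ℕ) : DecidableRel (myG l).Adj :=
  fun u v => inferInstanceAs (Decidable (_ ∧ _))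

lemma myG_adj (l : ℕ) (u v : Fin (2*l)) :
    (myG l).Adj u v ↔ u.val ≠ v.val ∧ ((u.val ≤ l ∧ v.val ≤ l) ∨ u.val + 1 = v.val ∨ v.val + 1 = u.val) :=
  Iff.rfl

lemma pot_le {V : Type*} {G : SimpleGraph V} (ψ : V → ℕ)
    (h : ∀ u v, G.Adj u v → ψ u ≤ ψ v + 1) :
    ∀ {u v : V} (p : G.Walk u v), ψ u ≤ ψ v + p.length := by
  intro u v p
  induction p with
  | nil => simp
  | cons ha p ih =>
      have := h _ _ ha
      simp only [SimpleGraph.Walk.length_cons]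
      omega

lemma myG_reach (l : ℕ) (hl : 0 < l) (v : Fin (2*l)) :
    (myG l).Reachable v ⟨l, by omega⟩ := by
  have key : ∀ j : ℕ, ∀ v : Fin (2*l), v.val = l + j → (myG l).Reachable v ⟨l, by omega⟩ := by
    intro j
    induction j with
    | zero => intro v hv; exact by rw [show v = ⟨l, by omega⟩ from Fin.ext hv]
    | succ j ih =>
        intro v hv
        have hlt : l + j < 2*l := by omega
        have hadj : (myG l).Adj v ⟨l + j, hlt⟩ := by
          refine ⟨?_, Or.inr (Or.inr ?_)⟩
          · show v.val ≠ l + j; omega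
          · show (l + j) + 1 = v.val; omega
        exact hadj.reachable.trans (ih ⟨l + j, hlt⟩ rfl)
  rcases le_or_gt v.val l with h | h
  · rcases eq_or_lt_of_le h with h' | h'
    · rw [show v = ⟨l, by omega⟩ from Fin.ext h']
    · refine SimpleGraph.Adj.reachable ⟨?_, Or.inl ⟨h, ?_⟩⟩
      · show v.val ≠ l; omega
      · show l ≤ l; omega
  · exact key (v.val - l) v (by omega)

lemma myG_connected (l : ℕ) (hl : 0 < l) : (myG l).Connected := by
  haveI : Nonempty (Fin (2*l)) := ⟨⟨0, by omega⟩⟩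
  exact ⟨fun u v => (myG_reach l hl u).trans (myG_reach l hl v).symm⟩

lemma myG_dist (l m : ℕ) (hl : 0 < l) (hm : m < l) :
    (myG l).dist ⟨m, by omega⟩ ⟨l + m, by omega⟩ = m + 1 := by
  have upper : ∀ j : ℕ, ∀ h : l + j < 2*l, (myG l).dist ⟨m, by omega⟩ ⟨l + j, h⟩ ≤ j + 1 := by
    intro j
    induction j with
    | zero =>
        intro _
        have hadj : (myG l).Adj ⟨m, by omega⟩ ⟨l + 0, by omega⟩ := by
          refine ⟨?_, Or.inl ⟨?_, ?_⟩⟩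
          · show m ≠ l + 0; omega
          · show m ≤ l; omega
          · show l + 0 ≤ l; omega
        calc (myG l).dist _ _ ≤ (SimpleGraph.Walk.cons hadj SimpleGraph.Walk.nil).length :=
              SimpleGraph.dist_le _
          _ = 1 := by simp
    | succ j ih =>
        intro hj
        have hadj : (myG l).Adj ⟨l + j, by omega⟩ ⟨l + (j+1), hj⟩ := by
          refine ⟨?_, Or.inr (Or.inl ?_)⟩
          · show l + j ≠ l + (j+1); omega
          · show (l + j) + 1 = l + (j+1); omega
        calc (myG l).dist ⟨m, by omega⟩ ⟨l + (j+1), hj⟩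
            ≤ (myG l).dist ⟨m, by omega⟩ ⟨l + j, by omega⟩
              + (myG l).dist ⟨l + j, by omega⟩ ⟨l + (j+1), hj⟩ :=
              (myG_connected l hl).dist_triangle
          _ ≤ (j + 1) + 1 := by
              refine Nat.add_le_add (ih (by omega)) ?_
              calc (myG l).dist _ _ ≤ (SimpleGraph.Walk.cons hadj SimpleGraph.Walk.nil).length :=
                    SimpleGraph.dist_le _
                _ = 1 := by simp
  set ψ : Fin (2*l) → ℕ := fun v => if v.val < l then m + 1 else (l + m) - v.val with hψ
  have hlip : ∀ u v, (myG l).Adj u v → ψ u ≤ ψ v + 1 := by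
    intro u v ⟨hne, hadj⟩
    have := u.isLt
    have := v.isLt
    simp only [hψ]
    split_ifs <;> omega
  have hr : (myG l).Reachable ⟨m, by omega⟩ ⟨l + m, by omega⟩ :=
    (myG_connected l hl).preconnected _ _
  obtain ⟨p, hp⟩ := hr.exists_walk_length_eq_dist
  have hlow := pot_le ψ hlip p
  rw [hp] at hlow
  have hu := upper m (by omega)
  have hA : ψ ⟨m, by omega⟩ = m + 1 := by
    simp only [hψ, Fin.val_mk]
    rw [if_pos hm]
  have hB : ψ ⟨l + m, by omega⟩ = 0 := by
    simp only [hψ, Fin.val_mk]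
    rw [if_neg (by omega)]
    omega
  rw [hA, hB] at hlow
  omega

lemma card_filter_fin (n : ℕ) (p : ℕ → Prop) [DecidablePred p] :
    (Finset.univ.filter (fun v : Fin n => p v.val)).card
      = ((Finset.range n).filter p).card := by
  apply Finset.card_bij (fun v _ => v.val)
  · intro a ha
    simp only [mem_filter, mem_range, Fin.is_lt, true_and]
    simpa using ha
  · intro a _ b _ h; exact Fin.ext h
  · intro b hb
    simp only [mem_filter, mem_range] at hb
    exact ⟨⟨b, hb.1⟩, by simpa using hb.2, rfl⟩

def Ncard (l : ℕ) (m : ℕ) : ℕ :=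
  (((Finset.range (2*l))).filter
    (fun a => m ≠ a ∧ ((m ≤ l ∧ a ≤ l) ∨ m + 1 = a ∨ a + 1 = m))).card

lemma myG_degree (l : ℕ) (v : Fin (2*l)) : (myG l).degree v = Ncard l v.val := by
  have h : (myG l).neighborFinset v
      = Finset.univ.filter (fun u : Fin (2*l) =>
          (fun a => v.val ≠ a ∧ ((v.val ≤ l ∧ a ≤ l) ∨ v.val + 1 = a ∨ a + 1 = v.val)) u.val) := by
    ext u
    simp [SimpleGraph.mem_neighborFinset, myG_adj]
  rw [SimpleGraph.degree, h]
  exact card_filter_fin (2*l) (fun a => v.val ≠ a ∧ ((v.val ≤ l ∧ a ≤ l) ∨ v.val + 1 = a ∨ a + 1 = v.val))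

lemma Ncard_lt (l m : ℕ) (hm : m < l) : Ncard l m = l := by
  have h : ((Finset.range (2*l))).filter
      (fun a => m ≠ a ∧ ((m ≤ l ∧ a ≤ l) ∨ m + 1 = a ∨ a + 1 = m))
      = (Finset.range (l+1)).erase m := by
    ext a
    simp only [mem_filter, mem_range, mem_erase]
    constructor
    · rintro ⟨h1, h2⟩; omega
    · rintro ⟨h1, h2⟩; omega
  rw [Ncard, h, Finset.card_erase_of_mem (by simp; omega), Finset.card_range]
  omega

lemma Ncard_one : Ncard 1 1 = 1 := by decide

lemma Ncard_hub (l : ℕ) (hl : 2 ≤ l) : Ncard l l = l + 1 := by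
  have h : ((Finset.range (2*l))).filter
      (fun a => l ≠ a ∧ ((l ≤ l ∧ a ≤ l) ∨ l + 1 = a ∨ a + 1 = l))
      = insert (l+1) (Finset.range l) := by
    ext a
    simp only [mem_filter, mem_range, mem_insert]
    constructor
    · rintro ⟨h1, h2⟩; omega
    · rintro h; omega
  rw [Ncard, h, Finset.card_insert_of_notMem (by simp), Finset.card_range]

lemma Ncard_mid (l m : ℕ) (h1 : l < m) (h2 : m < 2*l - 1) : Ncard l m = 2 := by
  have h : ((Finset.range (2*l))).filter
      (fun a => m ≠ a ∧ ((m ≤ l ∧ a ≤ l) ∨ m + 1 = a ∨ a + 1 = m))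
      = {m - 1, m + 1} := by
    ext a
    simp only [mem_filter, mem_range, mem_insert, mem_singleton]
    constructor
    · rintro ⟨ha, hb⟩; omega
    · rintro h; omega
  rw [Ncard, h, Finset.card_pair (by omega)]

lemma Ncard_last (l : ℕ) (hl : 2 ≤ l) : Ncard l (2*l - 1) = 1 := by
  have h : ((Finset.range (2*l))).filter
      (fun a => 2*l - 1 ≠ a ∧ ((2*l - 1 ≤ l ∧ a ≤ l) ∨ (2*l - 1) + 1 = a ∨ a + 1 = 2*l - 1))
      = {2*l - 2} := by
    ext a
    simp only [mem_filter, mem_range, mem_singleton]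
    constructor
    · rintro ⟨ha, hb⟩; omega
    · rintro h; omega
  rw [Ncard, h, Finset.card_singleton]

lemma sum_Ncard (l : ℕ) (hl : 0 < l) :
    ∑ a ∈ Finset.range (2*l), Ncard l a = l*l + 3*l - 2 := by
  rcases eq_or_lt_of_le (Nat.succ_le_of_lt hl) with h1 | h2
  · have h1' : l = 1 := h1.symm ▸ rfl
    subst h1'
    rw [show 2*1 = 2 from rfl, Finset.sum_range_succ, Finset.sum_range_one,
      Ncard_lt 1 0 (by omega), Ncard_one]
  · have hsplit1 : ∑ a ∈ Finset.range (2*l), Ncard l a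
        = ∑ a ∈ Finset.Ico 0 l, Ncard l a + ∑ a ∈ Finset.Ico l (2*l), Ncard l a := by
      rw [Finset.range_eq_Ico, ← Finset.sum_Ico_consecutive _ (Nat.zero_le l) (by omega : l ≤ 2*l)]
    have hsplit2 : ∑ a ∈ Finset.Ico l (2*l), Ncard l a
        = ∑ a ∈ Finset.Ico l (l+1), Ncard l a + ∑ a ∈ Finset.Ico (l+1) (2*l), Ncard l a := by
      rw [← Finset.sum_Ico_consecutive _ (by omega : l ≤ l+1) (by omega : l+1 ≤ 2*l)]
    have hsplit3 : ∑ a ∈ Finset.Ico (l+1) (2*l), Ncard l a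
        = ∑ a ∈ Finset.Ico (l+1) (2*l-1), Ncard l a + ∑ a ∈ Finset.Ico (2*l-1) (2*l), Ncard l a := by
      rw [← Finset.sum_Ico_consecutive _ (by omega : l+1 ≤ 2*l-1) (by omega : 2*l-1 ≤ 2*l)]
    have e1 : ∑ a ∈ Finset.Ico 0 l, Ncard l a = l * l := by
      rw [Finset.sum_congr rfl (fun a ha => Ncard_lt l a (by simpa using (Finset.mem_Ico.mp ha).2))]
      simp [Nat.card_Ico, mul_comm]
    have e2 : ∑ a ∈ Finset.Ico l (l+1), Ncard l a = l + 1 := by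
      rw [Nat.Ico_succ_singleton, Finset.sum_singleton, Ncard_hub l h2]
    have e3 : ∑ a ∈ Finset.Ico (l+1) (2*l-1), Ncard l a = 2 * (l - 2) := by
      rw [Finset.sum_congr rfl (fun a ha => by
        have := Finset.mem_Ico.mp ha
        exact Ncard_mid l a (by omega) (by omega))]
      simp [Nat.card_Ico]
      omega
    have e4 : ∑ a ∈ Finset.Ico (2*l-1) (2*l), Ncard l a = 1 := by
      have : Finset.Ico (2*l-1) (2*l) = {2*l-1} := by
        ext a
        simp only [Finset.mem_Ico, Finset.mem_singleton]
        omega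
      rw [this, Finset.sum_singleton]
      exact Ncard_last l h2
    rw [hsplit1, hsplit2, hsplit3, e1, e2, e3, e4]
    omega

lemma myG_card_edges (l : ℕ) (hl : 0 < l) :
    2 * (myG l).edgeFinset.card = l*l + 3*l - 2 := by
  rw [← SimpleGraph.sum_degrees_eq_twice_card_edges]
  rw [show (∑ v, (myG l).degree v) = ∑ a ∈ Finset.range (2*l), Ncard l a from by
    rw [← Fin.sum_univ_eq_sum_range (fun a => Ncard l a) (2*l)]
    exact Finset.sum_congr rfl (fun v _ => myG_degree l v)]
  exact sum_Ncard l hl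

/-- `f` is a distance `l`-labeling of `G`: its image is `{0,…,l}` or `{1,…,l}`, and any two
distinct vertices sharing a label `k` are at graph distance exactly `k`. -/
def IsDistLabeling {V : Type*} (G : SimpleGraph V) (l : ℕ) (f : V → ℕ) : Prop :=
  (Set.range f = Set.Icc 0 l ∨ Set.range f = Set.Icc 1 l) ∧
    ∀ u v : V, u ≠ v → f u = f v → G.dist u v = f u

/-- A distance `l`-labeling is regular of degree `r` if every label `k ∈ {1,…,l}` is used by
exactly `r` vertices. -/
def IsRegularDistLabeling {V : Type*} [Fintype V] [DecidableEq V]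
    (G : SimpleGraph V) (l r : ℕ) (f : V → ℕ) : Prop :=
  IsDistLabeling G l f ∧
    ∀ k : ℕ, 1 ≤ k → k ≤ l → (Finset.univ.filter (fun v : V => f v = k)).card = r

def labl (l : ℕ) (v : Fin (2*l)) : ℕ := if v.val < l then v.val + 1 else v.val - l + 1

lemma labl_range (l : ℕ) (hl : 0 < l) : Set.range (labl l) = Set.Icc 1 l := by
  ext y
  simp only [Set.mem_range, Set.mem_Icc]
  constructor
  · rintro ⟨v, rfl⟩
    have := v.isLt
    simp only [labl]
    split_ifs <;> omega
  · rintro ⟨h1, h2⟩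
    refine ⟨⟨y - 1, by omega⟩, ?_⟩
    simp only [labl, Fin.val_mk]
    rw [if_pos (by omega : y - 1 < l)]
    omega

lemma labl_dist (l : ℕ) (hl : 0 < l) (u v : Fin (2*l)) (hne : u ≠ v)
    (hf : labl l u = labl l v) : (myG l).dist u v = labl l u := by
  have huv : u.val ≠ v.val := fun h => hne (Fin.ext h)
  have hul := u.isLt
  have hvl := v.isLt
  simp only [labl] at hf ⊢
  split_ifs at hf with h1 h2 h2
  · exact absurd (show (u : ℕ) = (v : ℕ) by omega) huv
  · have hv2 : v = ⟨l + (u : ℕ), by omega⟩ := Fin.ext (show (v : ℕ) = l + (u : ℕ) by omega)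
    have hd : (myG l).dist u v = (u : ℕ) + 1 := by
      rw [hv2]; exact myG_dist l u.val hl h1
    rw [if_pos h1, hd]
  · have hu2 : u = ⟨l + (v : ℕ), by omega⟩ := Fin.ext (show (u : ℕ) = l + (v : ℕ) by omega)
    have hd : (myG l).dist u v = (v : ℕ) + 1 := by
      rw [SimpleGraph.dist_comm, hu2]; exact myG_dist l v.val hl h2
    rw [if_neg h1, hd]
    omega
  · exact absurd (show (u : ℕ) = (v : ℕ) by omega) huv

lemma labl_reg (l : ℕ) (hl : 0 < l) (k : ℕ) (hk1 : 1 ≤ k) (hk2 : k ≤ l) :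
    (Finset.univ.filter (fun v : Fin (2*l) => labl l v = k)).card = 2 := by
  have h : Finset.univ.filter (fun v : Fin (2*l) => labl l v = k)
      = {⟨k - 1, by omega⟩, ⟨l + (k - 1), by omega⟩} := by
    ext v
    have := v.isLt
    simp only [mem_filter, mem_univ, true_and]
    simp only [labl, mem_filter, mem_univ, true_and, mem_insert, mem_singleton, Fin.ext_iff,
      Fin.val_mk]
    split_ifs <;> omega
  rw [h, Finset.card_insert_of_notMem (by simp [Fin.ext_iff]; omega), Finset.card_singleton]

theorem exists_graph_two_regular_distance_labeling (l : ℕ) (hl : 0 < l) :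
    ∃ G : SimpleGraph (Fin (2 * l)), G.Connected ∧
      G.edgeSet.ncard = (l + 2) * (l + 1) / 2 - 2 ∧
      ∃ f : Fin (2 * l) → ℕ, IsRegularDistLabeling G l 2 f := by
  refine ⟨myG l, myG_connected l hl, ?_, ?_⟩
  · have h1 : (myG l).edgeSet.ncard = (myG l).edgeFinset.card := by
      rw [Set.ncard_eq_toFinset_card']
      congr 1
    have h2 := myG_card_edges l hl
    have h3 : (l + 2) * (l + 1) = l*l + 3*l + 2 := by ring
    omega
  · exact ⟨labl l, ⟨Or.inr (labl_range l hl), labl_dist l hl⟩, labl_reg l hl⟩
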